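/- For any Loday algebroid bracket on a vector bundle E over a manifold M, at any point p ∈ M where the right anchor a_r does not vanish, the left anchor equals the right anchor in a neighborhood of p and the bracket is skew-symmetric ([X,X] = 0 for all sections X) in that neighborhood. -/

import Mathlib

open scoped Manifold

set_option maxHeartbeats 1000000 in
/-- For a Loday algebroid bracket on (the module of sections of) a vector
bundle over a manifold `M` (with pointwise evaluation `ev p` into the fibres `V p`), at
any point `p` where the right anchor does not vanish, there is a neighbourhood of `p` on
which the left anchor equals the right anchor and on which the bracket is skew-symmetric
(`[X,X]` vanishes there for every section `X`). -/
theorem stmt13 {E H M : Type*} [NormedAddCommGroup E] [NormedSpace ℝ E] [TopologicalSpace H]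
    (I : ModelWithCorners ℝ E H) [TopologicalSpace M] [ChartedSpace H M]
    [IsManifold I (⊤ : ℕ∞) M]
    {A : Type*} [AddCommGroup A] [Module ℝ A] [Module C^(⊤ : ℕ∞)⟮I, M; ℝ⟯ A]
    [IsScalarTower ℝ C^(⊤ : ℕ∞)⟮I, M; ℝ⟯ A]
    (V : M → Type*) [∀ p, AddCommGroup (V p)] [∀ p, Module ℝ (V p)]
    (ev : ∀ p : M, A →ₗ[ℝ] V p)
    (hev : ∀ (p : M) (f : C^(⊤ : ℕ∞)⟮I, M; ℝ⟯) (X : A), ev p (f • X) = f p • ev p X)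
    (br : A →ₗ[ℝ] A →ₗ[ℝ] A)
    (al ar : A →ₗ[C^(⊤ : ℕ∞)⟮I, M; ℝ⟯] Derivation ℝ C^(⊤ : ℕ∞)⟮I, M; ℝ⟯ C^(⊤ : ℕ∞)⟮I, M; ℝ⟯)
    (hanchor : ∀ (f g : C^(⊤ : ℕ∞)⟮I, M; ℝ⟯) (X Y : A),
      br (f • X) (g • Y) = (f * g) • br X Y + (f * al X g) • Y - (g * ar Y f) • X)
    (hJ : ∀ X Y Z : A, br X (br Y Z) = br (br X Y) Z + br Y (br X Z))
    (p : M) (Y : A) (f : C^(⊤ : ℕ∞)⟮I, M; ℝ⟯) (hp : ar Y f p ≠ 0) :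
    ∃ U ∈ nhds p,
      (∀ (X : A) (g : C^(⊤ : ℕ∞)⟮I, M; ℝ⟯), ∀ q ∈ U, al X g q = ar X g q) ∧
      (∀ X : A, ∀ q ∈ U, ev q (br X X) = 0) := by
  -- left and right Leibniz rules for the bracket
  have hE : ∀ (f : C^(⊤ : ℕ∞)⟮I, M; ℝ⟯) (X Z : A), br (f • X) Z = f • br X Z - (ar Z f) • X := by
    intro f X Z; simpa using hanchor f 1 X Z
  have hF : ∀ (X : A) (g : C^(⊤ : ℕ∞)⟮I, M; ℝ⟯) (Z : A), br X (g • Z) = g • br X Z + (al X g) • Z := by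
    intro X g Z; simpa using hanchor 1 g X Z
  -- the fundamental identity obtained by scaling the first entry of the Jacobi identity
  have hIII : ∀ (f : C^(⊤ : ℕ∞)⟮I, M; ℝ⟯) (X Y Z : A),
      (ar Z f) • (br X Y + br Y X) = (al Y f - ar Y f) • br X Z
        + (ar Z (ar Y f) - al Y (ar Z f) + ar (br Y Z) f) • X := by
    intro f X Y Z
    have h1 := hJ (f • X) Y Z
    simp only [hE, hF, map_sub, map_smul, LinearMap.sub_apply, Derivation.coe_smul,
      Pi.smul_apply, smul_eq_mul, sub_smul, add_smul, smul_sub, smul_add, mul_smul] at h1 ⊢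
    linear_combination (norm := module) h1 - f • hJ X Y Z
  -- the key identity: (ar Z f) * (al X u - ar X u) annihilates every section
  have hKEY : ∀ (f u : C^(⊤ : ℕ∞)⟮I, M; ℝ⟯) (X Z W : A),
      ((ar Z f) * (al X u - ar X u)) • W = 0 := by
    intro f u X Z W
    have k1 := hIII f X (u • W) Z
    simp only [hE, hF, map_sub, map_smul, LinearMap.sub_apply, Derivation.coe_smul,
      Derivation.leibniz, Derivation.coe_sub, Pi.sub_apply,
      Pi.smul_apply, smul_eq_mul, sub_smul, add_smul, smul_sub, smul_add, mul_smul] at k1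
    have k2 := hIII f X W Z
    linear_combination (norm := module) k1 - u • k2
  -- the identity obtained by scaling the middle entry of the Jacobi identity
  have hII : ∀ (g : C^(⊤ : ℕ∞)⟮I, M; ℝ⟯) (X Z W : A),
      (ar (br X Z) g + ar Z (al X g) - al X (ar Z g)) • W = 0 := by
    intro g X Z W
    have h1 := hJ X (g • W) Z
    simp only [hE, hF, map_sub, map_add, map_smul, LinearMap.sub_apply, LinearMap.add_apply,
      Derivation.coe_smul, Derivation.leibniz, Derivation.coe_sub, Pi.sub_apply,
      Pi.smul_apply, smul_eq_mul, sub_smul, add_smul, smul_sub, smul_add, mul_smul] at h1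
    linear_combination (norm := module) h1 - g • hJ X W Z
  -- scalar consequences, using `ar` applied to the section `Y` and the function `f`
  have hδ : ∀ (u : C^(⊤ : ℕ∞)⟮I, M; ℝ⟯) (X : A),
      (al X u - ar X u) * (ar Y f * ar Y f) = 0 := by
    intro u X
    have h0 := hKEY f u X Y Y
    have h1 := congrArg (fun W => ar W f) h0
    simp only [map_smul, map_zero, Derivation.smul_apply, smul_eq_mul, Derivation.zero_apply]
      at h1
    linear_combination h1
  have hh2 : ∀ (g : C^(⊤ : ℕ∞)⟮I, M; ℝ⟯) (X Z : A),
      (ar (br X Z) g + ar Z (al X g) - al X (ar Z g)) * ar Y f = 0 := by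
    intro g X Z
    have h1 := congrArg (fun W => ar W f) (hII g X Z Y)
    simp only [map_smul, map_zero, Derivation.smul_apply, smul_eq_mul, Derivation.zero_apply]
      at h1
    linear_combination h1
  -- the neighbourhood
  refine ⟨{q | ar Y f q ≠ 0}, ?_, ?_, ?_⟩
  · exact ((isOpen_compl_singleton).preimage (ar Y f).contMDiff.continuous).mem_nhds hp
  · -- the anchors coincide on U
    intro X g q hq
    have h1 := congrArg (fun (F : C^(⊤ : ℕ∞)⟮I, M; ℝ⟯) => F q) (hδ g X)
    simp only [ContMDiffMap.coe_mul, Pi.mul_apply, ContMDiffMap.coe_sub, Pi.sub_apply,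
      ContMDiffMap.coe_zero, Pi.zero_apply] at h1
    rcases mul_eq_zero.1 h1 with h | h
    · exact sub_eq_zero.1 h
    · exact absurd (mul_self_eq_zero.1 h) hq
  · -- skew-symmetry on U
    intro X q hq
    have hal : ∀ (u : C^(⊤ : ℕ∞)⟮I, M; ℝ⟯) (X' : A), al X' u q = ar X' u q := by
      intro u X'
      have h1 := congrArg (fun (F : C^(⊤ : ℕ∞)⟮I, M; ℝ⟯) => F q) (hδ u X')
      simp only [ContMDiffMap.coe_mul, Pi.mul_apply, ContMDiffMap.coe_sub, Pi.sub_apply,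
        ContMDiffMap.coe_zero, Pi.zero_apply] at h1
      rcases mul_eq_zero.1 h1 with h | h
      · exact sub_eq_zero.1 h
      · exact absurd (mul_self_eq_zero.1 h) hq
    -- the derivative of (al X f - ar X f) in the direction ar Y vanishes at q
    have e1 : al X f q - ar X f q = 0 := sub_eq_zero.2 (hal f X)
    have hder : ar Y (al X f - ar X f) q = 0 := by
      have h0 := congrArg (ar Y) (hδ f X)
      rw [map_zero, Derivation.leibniz] at h0
      have h1 := congrArg (fun (F : C^(⊤ : ℕ∞)⟮I, M; ℝ⟯) => F q) h0
      simp only [smul_eq_mul, ContMDiffMap.coe_mul, Pi.mul_apply, ContMDiffMap.coe_add, Pi.add_apply,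
        ContMDiffMap.coe_zero, Pi.zero_apply, ContMDiffMap.coe_sub, Pi.sub_apply] at h1
      rw [e1, zero_mul, zero_add] at h1
      rcases mul_eq_zero.1 h1 with h | h
      · exact absurd (mul_self_eq_zero.1 h) hq
      · simpa [ContMDiffMap.coe_sub, Pi.sub_apply] using h
    have hd : ar Y (al X f) q = ar Y (ar X f) q := by
      have h := hder
      rw [map_sub] at h
      simp only [ContMDiffMap.coe_sub, Pi.sub_apply] at h
      linarith
    have e2 : ar Y (ar X f) q - al X (ar Y f) q + ar (br X Y) f q = 0 := by
      have hb := congrArg (fun (F : C^(⊤ : ℕ∞)⟮I, M; ℝ⟯) => F q) (hh2 f X Y)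
      simp only [ContMDiffMap.coe_mul, Pi.mul_apply, ContMDiffMap.coe_add, Pi.add_apply,
        ContMDiffMap.coe_sub, Pi.sub_apply, ContMDiffMap.coe_zero, Pi.zero_apply] at hb
      rcases mul_eq_zero.1 hb with h | h
      · linarith
      · exact absurd h hq
    have h3 := congrArg (ev q) (hIII f X X Y)
    simp only [map_add, hev, ContMDiffMap.coe_sub, ContMDiffMap.coe_add, Pi.sub_apply,
      Pi.add_apply] at h3
    simp only [e1, e2, zero_smul, add_zero, zero_add] at h3
    have h4 : ev q (br X X) + ev q (br X X) = 0 := by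
      rcases smul_eq_zero.1 h3 with h | h
      · exact absurd h hq
      · exact h
    have h5 : (2 : ℝ) • ev q (br X X) = 0 := by rw [two_smul]; exact h4
    simpa using (smul_eq_zero.1 h5).resolve_left (by norm_num)
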